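/- Let E be a real inner product space and F : E → ℝ a differentiable function whose gradient ∇F is L-Lipschitz for some L ≥ 0. Let Θ ∈ E and set u = ∇F(Θ). Let Δ, R ∈ E, γ ≥ 0, β ∈ ℝ, η ≥ 0, and B ≥ 0 with ‖Δ‖² ≤ B and ‖R‖² ≤ B, and define Θ' = Θ − η·(γ·(u + Δ) + β²·R). Then F(Θ') − F(Θ) ≤ ((3/2)·L·η²·γ² − (η/2)·(γ − β²))·‖u‖² + ((η/2)·(γ + β²) + (3L/2)·η²·(γ² + β⁴))·B. -/

import Mathlib

open intervalIntegral in
lemma descent_lemma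
    {E : Type*} [NormedAddCommGroup E] [InnerProductSpace ℝ E] [CompleteSpace E]
    (F : E → ℝ) (L : ℝ) (hL : 0 ≤ L)
    (hF : Differentiable ℝ F)
    (hLip : ∀ x y : E, ‖gradient F x - gradient F y‖ ≤ L * ‖x - y‖)
    (x v : E) :
    F (x + v) ≤ F x + inner ℝ (gradient F x) v + L / 2 * ‖v‖ ^ 2 := by
  set φ : ℝ → ℝ := fun t => inner ℝ (gradient F (x + t • v)) v with hφ
  have hderiv : ∀ t : ℝ, HasDerivAt (fun s => F (x + s • v)) (φ t) t := by
    intro t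
    have h1 : HasDerivAt (fun s : ℝ => x + s • v) v t := by
      simpa using ((hasDerivAt_id t).smul_const v).const_add x
    have h2 : HasFDerivAt F (fderiv ℝ F (x + t • v)) (x + t • v) :=
      (hF _).hasFDerivAt
    have h3 := h2.comp_hasDerivAt t h1
    have h4 : fderiv ℝ F (x + t • v) v = φ t := by
      have := (hF (x + t • v)).hasGradientAt
      rw [hasGradientAt_iff_hasFDerivAt] at this
      have h5 : fderiv ℝ F (x + t • v) = (InnerProductSpace.toDual ℝ E) (gradient F (x + t • v)) :=
        this.fderiv
      rw [h5]; rfl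
    rw [← h4]; exact h3
  have hgradLip : LipschitzWith (Real.toNNReal L) (gradient F) := by
    rw [lipschitzWith_iff_dist_le_mul]
    intro a b
    rw [dist_eq_norm, dist_eq_norm, Real.coe_toNNReal _ hL]
    exact hLip a b
  have hφcont : Continuous φ := by
    apply Continuous.inner
    · exact hgradLip.continuous.comp (by continuity)
    · exact continuous_const
  have hFTC : ∫ t in (0:ℝ)..1, φ t = F (x + (1:ℝ) • v) - F (x + (0:ℝ) • v) := by
    exact intervalIntegral.integral_eq_sub_of_hasDerivAt (fun t _ => hderiv t)
      (hφcont.intervalIntegrable 0 1)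
  have hbound : ∀ t ∈ Set.Icc (0:ℝ) 1, φ t ≤ φ 0 + L * t * ‖v‖ ^ 2 := by
    intro t ht
    have h1 : φ t - φ 0 = inner ℝ (gradient F (x + t • v) - gradient F (x + (0:ℝ) • v)) v := by
      rw [inner_sub_left]
    have h2 : φ t - φ 0 ≤ ‖gradient F (x + t • v) - gradient F (x + (0:ℝ) • v)‖ * ‖v‖ := by
      rw [h1]; exact real_inner_le_norm _ _
    have h3 : ‖gradient F (x + t • v) - gradient F (x + (0:ℝ) • v)‖ ≤ L * (t * ‖v‖) := by
      have := hLip (x + t • v) (x + (0:ℝ) • v)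
      have he : (x + t • v) - (x + (0:ℝ) • v) = t • v := by
        simp
      rw [he] at this
      calc _ ≤ L * ‖t • v‖ := this
        _ = L * (t * ‖v‖) := by rw [norm_smul, Real.norm_eq_abs, abs_of_nonneg ht.1]
    nlinarith [norm_nonneg v, mul_le_mul_of_nonneg_right h3 (norm_nonneg v)]
  have hint : ∫ t in (0:ℝ)..1, φ t ≤ ∫ t in (0:ℝ)..1, (φ 0 + L * t * ‖v‖ ^ 2) := by
    apply intervalIntegral.integral_mono_on (by norm_num)
    · exact hφcont.intervalIntegrable 0 1
    · exact (by continuity : Continuous fun t => φ 0 + L * t * ‖v‖ ^ 2).intervalIntegrable 0 1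
    · exact hbound
  have hval : ∫ t in (0:ℝ)..1, (φ 0 + L * t * ‖v‖ ^ 2) = φ 0 + L / 2 * ‖v‖ ^ 2 := by
    have h1 : ∀ t : ℝ, φ 0 + L * t * ‖v‖ ^ 2 = φ 0 + (L * ‖v‖ ^ 2) * t := fun t => by ring
    simp_rw [h1]
    rw [intervalIntegral.integral_add (intervalIntegrable_const)
      ((intervalIntegrable_id).const_mul _),
      intervalIntegral.integral_const, intervalIntegral.integral_const_mul, integral_id]
    norm_num; ring
  have hφ0 : φ 0 = inner ℝ (gradient F x) v := by simp [hφ]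
  rw [hFTC] at hint
  simp only [one_smul, zero_smul, add_zero] at hint
  rw [hval, hφ0] at hint
  linarith

set_option maxHeartbeats 1000000 in
/-- Per-step descent inequality for one global-server update of HALoS. -/
theorem per_step_descent
    {E : Type*} [NormedAddCommGroup E] [InnerProductSpace ℝ E] [CompleteSpace E]
    (F : E → ℝ) (L : ℝ) (hL : 0 ≤ L)
    (hF : Differentiable ℝ F)
    (hLip : ∀ x y : E, ‖gradient F x - gradient F y‖ ≤ L * ‖x - y‖)
    (Θ : E) (u : E) (hu : u = gradient F Θ)
    (Δ R : E) (γ β η B : ℝ) (hγ : 0 ≤ γ) (hη : 0 ≤ η) (hB : 0 ≤ B)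
    (hΔ : ‖Δ‖ ^ 2 ≤ B) (hR : ‖R‖ ^ 2 ≤ B)
    (Θ' : E) (hΘ' : Θ' = Θ - η • (γ • (u + Δ) + β ^ 2 • R)) :
    F Θ' - F Θ
      ≤ ((3 / 2) * L * η ^ 2 * γ ^ 2 - (η / 2) * (γ - β ^ 2)) * ‖u‖ ^ 2
        + ((η / 2) * (γ + β ^ 2) + (3 * L / 2) * η ^ 2 * (γ ^ 2 + β ^ 4)) * B := by
  set w : E := γ • (u + Δ) + β ^ 2 • R with hw
  have hv : Θ' - Θ = -(η • w) := by rw [hΘ']; abel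
  have key := descent_lemma F L hL hF hLip Θ (Θ' - Θ)
  rw [add_sub_cancel, ← hu] at key
  -- inner product term
  have hinner : (inner ℝ u (Θ' - Θ) : ℝ)
      = -η * (γ * (‖u‖ ^ 2 + inner ℝ u Δ) + β ^ 2 * inner ℝ u R) := by
    rw [hv, hw]
    simp [inner_neg_right, inner_smul_right, inner_add_right, real_inner_self_eq_norm_sq]
    ring
  -- norm term
  have hnorm : ‖Θ' - Θ‖ ^ 2 = η ^ 2 * ‖w‖ ^ 2 := by
    rw [hv, norm_neg, norm_smul, Real.norm_eq_abs, abs_of_nonneg hη, mul_pow]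
  have hwle : ‖w‖ ≤ γ * ‖u‖ + γ * ‖Δ‖ + β ^ 2 * ‖R‖ := by
    calc ‖w‖ ≤ ‖γ • (u + Δ)‖ + ‖β ^ 2 • R‖ := norm_add_le _ _
      _ ≤ γ * (‖u‖ + ‖Δ‖) + β ^ 2 * ‖R‖ := by
          rw [norm_smul, norm_smul, Real.norm_eq_abs, Real.norm_eq_abs,
            abs_of_nonneg hγ, abs_of_nonneg (sq_nonneg β)]
          gcongr
          exact norm_add_le _ _
      _ = γ * ‖u‖ + γ * ‖Δ‖ + β ^ 2 * ‖R‖ := by ring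
  have hwsq : ‖w‖ ^ 2 ≤ 3 * (γ ^ 2 * ‖u‖ ^ 2 + γ ^ 2 * ‖Δ‖ ^ 2 + β ^ 4 * ‖R‖ ^ 2) := by
    nlinarith [norm_nonneg w, norm_nonneg u, norm_nonneg Δ, norm_nonneg R,
      sq_nonneg (γ * ‖u‖ - γ * ‖Δ‖), sq_nonneg (γ * ‖u‖ - β ^ 2 * ‖R‖),
      sq_nonneg (γ * ‖Δ‖ - β ^ 2 * ‖R‖), mul_nonneg hγ (norm_nonneg u),
      mul_nonneg hγ (norm_nonneg Δ), mul_nonneg (sq_nonneg β) (norm_nonneg R)]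
  have hiΔ : -(inner ℝ u Δ : ℝ) ≤ (‖u‖ ^ 2 + ‖Δ‖ ^ 2) / 2 := by
    nlinarith [abs_real_inner_le_norm u Δ, neg_abs_le (inner ℝ u Δ : ℝ),
      sq_nonneg (‖u‖ - ‖Δ‖)]
  have hiR : -(inner ℝ u R : ℝ) ≤ (‖u‖ ^ 2 + ‖R‖ ^ 2) / 2 := by
    nlinarith [abs_real_inner_le_norm u R, neg_abs_le (inner ℝ u R : ℝ),
      sq_nonneg (‖u‖ - ‖R‖)]
  have hηγ : 0 ≤ η * γ := mul_nonneg hη hγ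
  have hηβ : 0 ≤ η * β ^ 2 := mul_nonneg hη (sq_nonneg β)
  have hLη : 0 ≤ L * η ^ 2 := mul_nonneg hL (sq_nonneg η)
  rw [hinner, hnorm] at key
  have hβ4 : (0:ℝ) ≤ β ^ 4 := by positivity
  have h1 : (η * γ) * (-(inner ℝ u Δ : ℝ)) ≤ (η * γ) * ((‖u‖ ^ 2 + B) / 2) :=
    mul_le_mul_of_nonneg_left (by linarith) hηγ
  have h2 : (η * β ^ 2) * (-(inner ℝ u R : ℝ)) ≤ (η * β ^ 2) * ((‖u‖ ^ 2 + B) / 2) :=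
    mul_le_mul_of_nonneg_left (by linarith) hηβ
  have hw2 : ‖w‖ ^ 2 ≤ 3 * γ ^ 2 * ‖u‖ ^ 2 + 3 * (γ ^ 2 + β ^ 4) * B := by
    have a1 : γ ^ 2 * ‖Δ‖ ^ 2 ≤ γ ^ 2 * B := mul_le_mul_of_nonneg_left hΔ (sq_nonneg γ)
    have a2 : β ^ 4 * ‖R‖ ^ 2 ≤ β ^ 4 * B := mul_le_mul_of_nonneg_left hR hβ4
    linarith
  have h3 : (L / 2 * η ^ 2) * ‖w‖ ^ 2
      ≤ (L / 2 * η ^ 2) * (3 * γ ^ 2 * ‖u‖ ^ 2 + 3 * (γ ^ 2 + β ^ 4) * B) :=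
    mul_le_mul_of_nonneg_left hw2 (by positivity)
  nlinarith [key, h1, h2, h3]
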